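/- Let T1 and T2 be trees on the same label set 𝒳 and let X ⊆ 𝒳. Then T1 − X = T2 − X if and only if there is an LPR sequence (x1, x2, …, xk) turning T1 into T2 such that X = {x1, …, xk}. -/

import Mathlib

/-!
Common framework: rooted binary trees with leaves bijectively labeled by a
finite label set, leaf removal, restriction, the leaf-removal distance `d_LR`,
compatibility, leaf-disagreements, triplets, LPR moves, etc.
-/

universe u

/-- A rooted binary tree whose leaves carry labels from `α`. -/
inductive LTree (α : Type u) : Type u where
  | leaf : α → LTree α
  | node : LTree α → LTree α → LTree α

namespace LTree

variable {α : Type u} [DecidableEq α]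

/-- The set of leaf labels of a tree. -/
def labels : LTree α → Finset α
  | leaf a => {a}
  | node l r => labels l ∪ labels r

/-- A tree is `Good` when its leaves carry pairwise distinct labels
(i.e. the leaves are bijectively labeled). -/
def Good : LTree α → Prop
  | leaf _ => True
  | node l r => Good l ∧ Good r ∧ Disjoint (labels l) (labels r)

/-- `T` is a (rooted binary, uniquely leaf-labeled) tree on label set `𝒳`. -/
def IsTreeOn (T : LTree α) (𝒳 : Finset α) : Prop :=
  Good T ∧ labels T = 𝒳

/-- Equality of rooted trees: children of a node are unordered. -/
inductive Iso : LTree α → LTree α → Prop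
  | leaf (a : α) : Iso (leaf a) (leaf a)
  | node {l₁ r₁ l₂ r₂ : LTree α} :
      Iso l₁ l₂ → Iso r₁ r₂ → Iso (node l₁ r₁) (node l₂ r₂)
  | swap {l₁ r₁ l₂ r₂ : LTree α} :
      Iso l₁ r₂ → Iso r₁ l₂ → Iso (node l₁ r₁) (node l₂ r₂)

/-- Equality of possibly empty trees (`none` is the empty tree). -/
def OptIso : Option (LTree α) → Option (LTree α) → Prop
  | none, none => True
  | some t₁, some t₂ => Iso t₁ t₂
  | _, _ => False

/-- Restriction `T|_S`: keep exactly the leaves with labels in `S`, suppressing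
the resulting degree-two vertices and degree-one roots; the result is `none`
when no leaf survives. -/
def restrict : LTree α → Finset α → Option (LTree α)
  | leaf a, S => if a ∈ S then some (leaf a) else none
  | node l r, S =>
    match restrict l S, restrict r S with
    | some l', some r' => some (node l' r')
    | some l', none => some l'
    | none, some r' => some r'
    | none, none => none

/-- `T − X`: remove from `T` every leaf whose label lies in `X`. -/
def remove (T : LTree α) (X : Finset α) : Option (LTree α) :=
  restrict T (labels T \ X)

/-- The leaf-removal distance `d_LR(T₁,T₂)`: the minimum number of labels
whose removal makes the two trees equal. -/
noncomputable def dLR (T₁ T₂ : LTree α) : ℕ :=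
  sInf {n | ∃ X : Finset α, X ⊆ labels T₁ ∪ labels T₂ ∧ X.card = n ∧
    OptIso (remove T₁ X) (remove T₂ X)}

def labelsO : Option (LTree α) → Finset α
  | none => ∅
  | some t => labels t

def GoodO : Option (LTree α) → Prop
  | none => True
  | some t => Good t

def restrictO : Option (LTree α) → Finset α → Option (LTree α)
  | none, _ => none
  | some t, S => restrict t S

/-- A family of (possibly empty) trees is compatible if there is a single tree,
on the union of their label sets, which displays all of them. -/
def CompatibleFamO {ι : Type*} (f : ι → Option (LTree α)) : Prop :=
  ∃ TO : Option (LTree α), GoodO TO ∧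
    (↑(labelsO TO) : Set α) = (⋃ i, ↑(labelsO (f i))) ∧
    ∀ i, OptIso (restrictO TO (labelsO (f i))) (f i)

/-- A family of trees is compatible if a single tree displays all of them. -/
def CompatibleFam {ι : Type*} (𝒯 : ι → LTree α) : Prop :=
  CompatibleFamO fun i => some (𝒯 i)

/-- `X` is a leaf-disagreement for the family `𝒯`: removing `X i` from `𝒯 i`
yields a compatible family. -/
def IsLeafDisagreement {ι : Type*} (𝒯 : ι → LTree α) (X : ι → Finset α) : Prop :=
  CompatibleFamO fun i => remove (𝒯 i) (X i)

/-- `X'` is a label-disagreement for the family `𝒯`. -/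
def IsLabelDisagreement {ι : Type*} (𝒯 : ι → LTree α) (X' : Finset α) : Prop :=
  CompatibleFamO fun i => remove (𝒯 i) X'

/-- `MASTRL 𝒯`: the minimum size of a leaf-disagreement for `𝒯`. -/
noncomputable def MASTRL {t : ℕ} (𝒯 : Fin t → LTree α) : ℕ :=
  sInf {v | ∃ X : Fin t → Finset α, (∀ i, X i ⊆ labels (𝒯 i)) ∧
    (∑ i, (X i).card) = v ∧ IsLeafDisagreement 𝒯 X}

/-- The triplet `ab|c` (as a tree). -/
def tripletTree (a b c : α) : LTree α := node (node (leaf a) (leaf b)) (leaf c)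

/-- A rooted triplet: a tree with exactly three (distinctly labeled) leaves. -/
def IsTriplet (R : LTree α) : Prop := Good R ∧ (labels R).card = 3

/-- `ab|c` is a triplet of `T`, i.e. `T|_{a,b,c} = ab|c`. -/
def IsTripletOf (T : LTree α) (a b c : α) : Prop :=
  OptIso (restrict T {a, b, c}) (some (tripletTree a b c))

/-- `tr(T)`: the triplet decomposition of `T`. -/
def trSet (T : LTree α) : Set (LTree α) :=
  {R | ∃ a b c : α, R = tripletTree a b c ∧ IsTripletOf T a b c}

/-- A set of trees is compatible: some tree on the union of the label sets
displays every member. -/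
def CompatibleSet (S : Set (LTree α)) : Prop :=
  ∃ TO : Option (LTree α), GoodO TO ∧
    (↑(labelsO TO) : Set α) = (⋃ R ∈ S, ↑(labels R)) ∧
    ∀ R ∈ S, OptIso (restrictO TO (labels R)) (some R)

/-- `MINRTI ℛ`: the minimum number of triplets to delete from `ℛ` so that the
remaining triplets are compatible. -/
noncomputable def MINRTI {t : ℕ} (R : Fin t → LTree α) : ℕ :=
  sInf {m | ∃ s : Finset (Fin t), s.card = m ∧
    CompatibleFam (fun i : {i : Fin t // i ∉ s} => R i.1)}

/-- Graft the leaf `x` at the position (edge) addressed by `p` in `T`.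
The empty address grafts `x` above the root of `T` (the `⊥` case); the address
of an internal/leaf vertex `v` grafts `x` on the edge between `v` and its
parent.  `none` when the address is invalid. -/
def graftAt (x : α) : LTree α → List Bool → Option (LTree α)
  | T, [] => some (node (leaf x) T)
  | leaf _, _ :: _ => none
  | node l r, b :: p =>
    if b then (graftAt x l p).map (fun l' => node l' r)
    else (graftAt x r p).map (fun r' => node l r')

/-- `T'` is obtained from `T` by a single LPR (leaf prune-and-regraft) move on
the leaf `x`: prune `x` from `T` and regraft it, either on an edge of
`T − {x}` or above its root. -/
def LPRStep (x : α) (T T' : LTree α) : Prop :=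
  (remove T {x} = none ∧ T' = leaf x) ∨
  ∃ T₀ p, remove T {x} = some T₀ ∧ graftAt x T₀ p = some T'

/-- `TurnsInto L T T'`: the LPR sequence with (ordered) leaf list `L` turns
`T` into `T'`. -/
inductive TurnsInto : List α → LTree α → LTree α → Prop
  | nil {T T' : LTree α} : Iso T T' → TurnsInto [] T T'
  | cons {x : α} {xs : List α} {T T'' T' : LTree α} :
      LPRStep x T T'' → TurnsInto xs T'' T' → TurnsInto (x :: xs) T T'

/-- `confset(T₁,T₂)`: the collection of 3-label sets `{a,b,c}` such that
`T₁` contains a triplet on `{a,b,c}` conflicting with a triplet of `T₂`. -/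
def confset (T₁ T₂ : LTree α) : Set (Finset α) :=
  {s | ∃ a b c : α, s = {a, b, c} ∧ IsTripletOf T₁ a b c ∧
    (IsTripletOf T₂ a c b ∨ IsTripletOf T₂ b c a)}

/-- `X` is a minimal disagreement between `T₁` and `T₂`. -/
def MinimalDisagreement (T₁ T₂ : LTree α) (X : Finset α) : Prop :=
  X ⊆ labels T₁ ∪ labels T₂ ∧
  OptIso (remove T₁ X) (remove T₂ X) ∧
  ∀ X' ⊂ X, ¬ OptIso (remove T₁ X') (remove T₂ X')

/-- `u` is (the rooted subtree hanging at) a node of `T`. -/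
inductive IsSubtree : LTree α → LTree α → Prop
  | refl (T : LTree α) : IsSubtree T T
  | left {u l r : LTree α} : IsSubtree u l → IsSubtree u (node l r)
  | right {u l r : LTree α} : IsSubtree u r → IsSubtree u (node l r)

/-- `u` is the least common ancestor in `T` of the labels in `Z`. -/
def IsLCA (T : LTree α) (Z : Finset α) (u : LTree α) : Prop :=
  IsSubtree u T ∧ Z ⊆ labels u ∧
    ∀ w, IsSubtree w T → Z ⊆ labels w → IsSubtree u w


/-! ### Auxiliary lemmas for Statement 11 -/

section Aux

theorem labels_nonempty (T : LTree α) : (labels T).Nonempty := by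
  induction T with
  | leaf a => exact ⟨a, by simp [labels]⟩
  | node l r ihl ihr => exact ihl.mono (by simp [labels, Finset.subset_union_left])

theorem good_of_labels_singleton {T : LTree α} {x : α} (hg : Good T)
    (h : labels T = {x}) : T = leaf x := by
  induction T with
  | leaf a => simp [labels] at h; subst h; rfl
  | node l r ihl ihr =>
    obtain ⟨gl, gr, hd⟩ := hg
    simp only [labels] at h
    have hl : labels l = {x} := by
      rcases Finset.subset_singleton_iff.mp (h ▸ Finset.subset_union_left) with h' | h'
      · exact absurd h' (labels_nonempty l).ne_empty
      · exact h'
    have hr : labels r = {x} := by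
      rcases Finset.subset_singleton_iff.mp (h ▸ Finset.subset_union_right) with h' | h'
      · exact absurd h' (labels_nonempty r).ne_empty
      · exact h'
    rw [hl, hr] at hd
    simp [Finset.disjoint_singleton] at hd

theorem labels_restrict (T : LTree α) (S : Finset α) :
    labelsO (restrict T S) = labels T ∩ S := by
  induction T with
  | leaf a =>
    by_cases h : a ∈ S <;>
      simp [restrict, labelsO, labels, h, Finset.singleton_inter_of_mem,
        Finset.singleton_inter_of_notMem]
  | node l r ihl ihr =>
    simp only [restrict, labels, Finset.union_inter_distrib_right]
    cases hl : restrict l S <;> cases hr : restrict r S <;>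
      rw [hl] at ihl <;> rw [hr] at ihr <;>
      simp only [labelsO] at ihl ihr <;>
      simp [labelsO, labels, ← ihl, ← ihr]

theorem restrict_congr (T : LTree α) {S S' : Finset α}
    (h : labels T ∩ S = labels T ∩ S') : restrict T S = restrict T S' := by
  induction T with
  | leaf a =>
    have := Finset.ext_iff.mp h a
    simp [labels] at this
    simp [restrict, this]
  | node l r ihl ihr =>
    have hl : labels l ∩ S = labels l ∩ S' := by
      ext y
      have := Finset.ext_iff.mp h y
      simp [labels] at this ⊢
      tauto
    have hr : labels r ∩ S = labels r ∩ S' := by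
      ext y
      have := Finset.ext_iff.mp h y
      simp [labels] at this ⊢
      tauto
    simp only [restrict, ihl hl, ihr hr]

theorem restrict_full {T : LTree α} {S : Finset α} (h : labels T ⊆ S) :
    restrict T S = some T := by
  induction T with
  | leaf a => simp [labels] at h; simp [restrict, h]
  | node l r ihl ihr =>
    simp only [labels, Finset.union_subset_iff] at h
    simp [restrict, ihl h.1, ihr h.2]

theorem restrict_restrict (T : LTree α) (S S' : Finset α) :
    restrictO (restrict T S) S' = restrict T (S ∩ S') := by
  induction T with
  | leaf a =>
    by_cases h : a ∈ S <;> by_cases h' : a ∈ S' <;>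
      simp [restrict, restrictO, h, h']
  | node l r ihl ihr =>
    cases hl : restrict l S with
    | none =>
      cases hr : restrict r S with
      | none =>
        rw [hl] at ihl; rw [hr] at ihr
        simp only [restrictO] at ihl ihr
        simp only [restrict, hl, hr, restrictO, ← ihl, ← ihr]
      | some r' =>
        rw [hl] at ihl; rw [hr] at ihr
        simp only [restrictO] at ihl ihr
        simp only [restrict, hl, hr, restrictO, ← ihl, ← ihr]
        cases restrict r' S' <;> rfl
    | some l' =>
      cases hr : restrict r S with
      | none =>
        rw [hl] at ihl; rw [hr] at ihr
        simp only [restrictO] at ihl ihr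
        simp only [restrict, hl, hr, restrictO, ← ihl, ← ihr]
        cases restrict l' S' <;> rfl
      | some r' =>
        rw [hl] at ihl; rw [hr] at ihr
        simp only [restrictO] at ihl ihr
        simp only [restrict, hl, hr, restrictO, ← ihl, ← ihr]

end Aux

section Aux2

theorem iso_refl (T : LTree α) : Iso T T := by
  induction T with
  | leaf a => exact Iso.leaf a
  | node l r ihl ihr => exact Iso.node ihl ihr

theorem iso_symm {T U : LTree α} (h : Iso T U) : Iso U T := by
  induction h with
  | leaf a => exact Iso.leaf a
  | node h1 h2 ih1 ih2 => exact Iso.node ih1 ih2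
  | swap h1 h2 ih1 ih2 => exact Iso.swap ih2 ih1

theorem iso_trans {T U V : LTree α} (h1 : Iso T U) (h2 : Iso U V) : Iso T V := by
  induction h1 generalizing V with
  | leaf a => exact h2
  | node ha hb iha ihb =>
    cases h2 with
    | node hc hd => exact Iso.node (iha hc) (ihb hd)
    | swap hc hd => exact Iso.swap (iha hc) (ihb hd)
  | swap ha hb iha ihb =>
    cases h2 with
    | node hc hd => exact Iso.swap (iha hd) (ihb hc)
    | swap hc hd => exact Iso.node (iha hd) (ihb hc)

theorem iso_labels {T U : LTree α} (h : Iso T U) : labels T = labels U := by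
  induction h with
  | leaf a => rfl
  | node h1 h2 ih1 ih2 => simp [labels, ih1, ih2]
  | swap h1 h2 ih1 ih2 => simp [labels, ih1, ih2, Finset.union_comm]

theorem optIso_refl (t : Option (LTree α)) : OptIso t t := by
  cases t with
  | none => trivial
  | some T => exact iso_refl T

theorem optIso_symm {t u : Option (LTree α)} (h : OptIso t u) : OptIso u t := by
  cases t <;> cases u <;> simp [OptIso] at h ⊢ <;> first | trivial | exact iso_symm h

theorem optIso_trans {t u v : Option (LTree α)} (h1 : OptIso t u) (h2 : OptIso u v) :
    OptIso t v := by
  cases t <;> cases u <;> cases v <;> simp [OptIso] at h1 h2 ⊢ <;>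
    first | trivial | exact iso_trans h1 h2

theorem iso_restrict {T U : LTree α} (h : Iso T U) (S : Finset α) :
    OptIso (restrict T S) (restrict U S) := by
  induction h with
  | leaf a => exact optIso_refl _
  | node h1 h2 ih1 ih2 =>
    rename_i l1 r1 l2 r2
    cases ha : restrict l1 S <;> rw [ha] at ih1 <;>
      cases hb : restrict l2 S <;> rw [hb] at ih1 <;>
      cases hc : restrict r1 S <;> rw [hc] at ih2 <;>
      cases hd : restrict r2 S <;> rw [hd] at ih2 <;>
      simp only [restrict, ha, hb, hc, hd] <;>
      simp only [OptIso] at ih1 ih2 ⊢ <;>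
      first
        | trivial | exact ih1.elim | exact ih2.elim | exact ih1 | exact ih2
        | exact Iso.node ih1 ih2
  | swap h1 h2 ih1 ih2 =>
    rename_i l1 r1 l2 r2
    cases ha : restrict l1 S <;> rw [ha] at ih1 <;>
      cases hd : restrict r2 S <;> rw [hd] at ih1 <;>
      cases hc : restrict r1 S <;> rw [hc] at ih2 <;>
      cases hb : restrict l2 S <;> rw [hb] at ih2 <;>
      simp only [restrict, ha, hb, hc, hd] <;>
      simp only [OptIso] at ih1 ih2 ⊢ <;>
      first
        | trivial | exact ih1.elim | exact ih2.elim | exact ih1 | exact ih2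
        | exact Iso.swap ih1 ih2

end Aux2

section Aux3

/-- Apply `remove` to a possibly-empty tree. -/
def removeO : Option (LTree α) → Finset α → Option (LTree α)
  | none, _ => none
  | some t, S => remove t S

theorem labels_remove (T : LTree α) (X : Finset α) :
    labelsO (remove T X) = labels T \ X := by
  rw [remove, labels_restrict]
  exact Finset.inter_eq_right.mpr Finset.sdiff_subset

theorem remove_union (T : LTree α) (S S' : Finset α) :
    remove T (S ∪ S') = removeO (remove T S) S' := by
  cases h : remove T S with
  | none =>
    have hl : labels T \ S = ∅ := by rw [← labels_remove T S, h]; rfl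
    have hl2 : labels T \ (S ∪ S') = ∅ :=
      Finset.subset_empty.mp
        (hl ▸ Finset.sdiff_subset_sdiff (le_refl _) Finset.subset_union_left)
    have this1 : labels T ∩ (labels T \ (S ∪ S')) = labels T ∩ (labels T \ S) := by
      rw [hl, hl2]
    show remove T (S ∪ S') = none
    rw [remove, restrict_congr T this1, ← remove]
    exact h
  | some t =>
    have hlt : labels t = labels T \ S := by rw [← labels_remove T S, h]; rfl
    have key := restrict_restrict T (labels T \ S) (labels t \ S')
    rw [show restrict T (labels T \ S) = some t from h] at key
    simp only [restrictO] at key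
    show remove T (S ∪ S') = remove t S'
    rw [remove, remove, key]
    apply restrict_congr
    rw [hlt]
    ext y
    simp only [Finset.mem_inter, Finset.mem_sdiff, Finset.mem_union]
    tauto

theorem remove_insert (T : LTree α) (x : α) (S : Finset α) :
    remove T (insert x S) = removeO (remove T {x}) S := by
  rw [show insert x S = {x} ∪ S by ext y; simp, remove_union]

theorem iso_remove {T U : LTree α} (h : Iso T U) (X : Finset α) :
    OptIso (remove T X) (remove U X) := by
  rw [remove, remove, ← iso_labels h]
  exact iso_restrict h _

theorem good_restrict {T : LTree α} (hg : Good T) (S : Finset α) :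
    GoodO (restrict T S) := by
  induction T with
  | leaf a => by_cases h : a ∈ S <;> simp [restrict, h, GoodO, Good]
  | node l r ihl ihr =>
    obtain ⟨gl, gr, hd⟩ := hg
    have h1 := ihl gl
    have h2 := ihr gr
    cases hl : restrict l S <;> rw [hl] at h1 <;>
      cases hr : restrict r S <;> rw [hr] at h2 <;>
      simp only [restrict, hl, hr, GoodO] at h1 h2 ⊢ <;>
      try assumption
    refine ⟨h1, h2, ?_⟩
    rename_i l' r'
    have e1 : labels l' = labels l ∩ S := by rw [← labels_restrict l S, hl]; rfl
    have e2 : labels r' = labels r ∩ S := by rw [← labels_restrict r S, hr]; rfl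
    rw [e1, e2]
    exact hd.mono Finset.inter_subset_left Finset.inter_subset_left

theorem good_remove {T : LTree α} (hg : Good T) (X : Finset α) :
    GoodO (remove T X) := good_restrict hg _

end Aux3

section Aux4

theorem graft_labels {x : α} {T T' : LTree α} {p : List Bool}
    (h : graftAt x T p = some T') : labels T' = insert x (labels T) := by
  induction p generalizing T T' with
  | nil =>
    simp only [graftAt, Option.some.injEq] at h
    subst h
    simp [labels]
  | cons b p ih =>
    cases T with
    | leaf a => simp [graftAt] at h
    | node l r =>
      cases b <;> simp only [graftAt, if_true, if_false, Bool.false_eq_true,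
          if_neg, Option.map_eq_some_iff] at h <;>
        obtain ⟨t', ht', rfl⟩ := h <;>
        simp only [labels, ih ht'] <;> ext y <;> simp <;> tauto

theorem graft_good {x : α} {T T' : LTree α} {p : List Bool}
    (h : graftAt x T p = some T') (hg : Good T) (hx : x ∉ labels T) : Good T' := by
  induction p generalizing T T' with
  | nil =>
    simp only [graftAt, Option.some.injEq] at h
    subst h
    exact ⟨trivial, hg, by simp [labels, Finset.disjoint_singleton_left, hx]⟩
  | cons b p ih =>
    cases T with
    | leaf a => simp [graftAt] at h
    | node l r =>
      obtain ⟨gl, gr, hd⟩ := hg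
      simp only [labels, Finset.mem_union] at hx
      push_neg at hx
      cases b <;> simp only [graftAt, if_true, if_false, Bool.false_eq_true,
          if_neg, Option.map_eq_some_iff] at h <;>
        obtain ⟨t', ht', rfl⟩ := h
      · refine ⟨gl, ih ht' gr hx.2, ?_⟩
        rw [graft_labels ht']
        simp [Finset.disjoint_insert_right, hx.1, hd]
      · refine ⟨ih ht' gl hx.1, gr, ?_⟩
        rw [graft_labels ht']
        simp [Finset.disjoint_insert_left, hx.2, hd]

theorem graft_restrict {x : α} {T T' : LTree α} {p : List Bool} {S : Finset α}
    (h : graftAt x T p = some T') (hx : x ∉ S) (hT : labels T ⊆ S) :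
    restrict T' S = some T := by
  induction p generalizing T T' with
  | nil =>
    simp only [graftAt, Option.some.injEq] at h
    subst h
    simp [restrict, hx, restrict_full hT]
  | cons b p ih =>
    cases T with
    | leaf a => simp [graftAt] at h
    | node l r =>
      simp only [labels, Finset.union_subset_iff] at hT
      cases b <;> simp only [graftAt, if_true, if_false, Bool.false_eq_true,
          if_neg, Option.map_eq_some_iff] at h <;>
        obtain ⟨t', ht', rfl⟩ := h
      · simp [restrict, restrict_full hT.1, ih ht' hT.2]
      · simp [restrict, restrict_full hT.2, ih ht' hT.1]

theorem remove_graft {x : α} {T T' : LTree α} {p : List Bool}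
    (h : graftAt x T p = some T') (hx : x ∉ labels T) :
    remove T' {x} = some T := by
  rw [remove, graft_labels h]
  have heq : insert x (labels T) \ {x} = labels T := by
    ext y
    simp only [Finset.mem_sdiff, Finset.mem_insert, Finset.mem_singleton]
    constructor
    · rintro ⟨h1 | h1, h2⟩
      · exact absurd h1 h2
      · exact h1
    · intro hy
      exact ⟨Or.inr hy, fun e => hx (e ▸ hy)⟩
  rw [heq]
  exact graft_restrict h (fun e => hx e) le_rfl

theorem graft_iso {x : α} {U T T' : LTree α} {p : List Bool}
    (hI : Iso U T) (h : graftAt x T p = some T') :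
    ∃ q U', graftAt x U q = some U' ∧ Iso U' T' := by
  induction p generalizing U T T' with
  | nil =>
    simp only [graftAt, Option.some.injEq] at h
    subst h
    exact ⟨[], node (leaf x) U, by simp [graftAt], Iso.node (Iso.leaf x) hI⟩
  | cons b p ih =>
    cases T with
    | leaf a => simp [graftAt] at h
    | node l r =>
      cases b <;> simp only [graftAt, if_true, if_false, Bool.false_eq_true,
          if_neg, Option.map_eq_some_iff] at h <;>
        obtain ⟨t', ht', rfl⟩ := h <;>
        cases hI with
        | node h1 h2 =>
          first
          | (obtain ⟨q, u', hq, hiso⟩ := ih h2 ht'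
             exact ⟨false :: q, _, by simp [graftAt, hq], Iso.node h1 hiso⟩)
          | (obtain ⟨q, u', hq, hiso⟩ := ih h1 ht'
             exact ⟨true :: q, _, by simp [graftAt, hq], Iso.node hiso h2⟩)
        | swap h1 h2 =>
          first
          | (obtain ⟨q, u', hq, hiso⟩ := ih h1 ht'
             exact ⟨true :: q, _, by simp [graftAt, hq], Iso.swap hiso h2⟩)
          | (obtain ⟨q, u', hq, hiso⟩ := ih h2 ht'
             exact ⟨false :: q, _, by simp [graftAt, hq], Iso.swap h1 hiso⟩)

end Aux4

section Aux5

theorem remove_node_left {l r : LTree α} {x : α} (hxl : x ∈ labels l)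
    (hxr : x ∉ labels r) :
    remove (node l r) {x} =
      match remove l {x} with
      | none => some r
      | some l₀ => some (node l₀ r) := by
  have hr : restrict r (labels (node l r) \ {x}) = some r := by
    apply restrict_full
    intro y hy
    simp [labels, Finset.mem_sdiff]
    exact ⟨Or.inr hy, fun e => hxr (e ▸ hy)⟩
  have hl : restrict l (labels (node l r) \ {x}) = remove l {x} := by
    rw [remove]
    apply restrict_congr
    ext y; simp [labels]; tauto
  rw [remove]
  show restrict (node l r) _ = _
  simp only [restrict, hl, hr]
  cases remove l {x} <;> rfl

theorem remove_node_right {l r : LTree α} {x : α} (hxl : x ∉ labels l)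
    (hxr : x ∈ labels r) :
    remove (node l r) {x} =
      match remove r {x} with
      | none => some l
      | some r₀ => some (node l r₀) := by
  have hl : restrict l (labels (node l r) \ {x}) = some l := by
    apply restrict_full
    intro y hy
    simp [labels, Finset.mem_sdiff]
    exact ⟨Or.inl hy, fun e => hxl (e ▸ hy)⟩
  have hr : restrict r (labels (node l r) \ {x}) = remove r {x} := by
    rw [remove]
    apply restrict_congr
    ext y; simp [labels]; tauto
  rw [remove]
  show restrict (node l r) _ = _
  simp only [restrict, hl, hr]
  cases remove r {x} <;> rfl

theorem remove_singleton_none {T : LTree α} {x : α} (hg : Good T)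
    (hx : x ∈ labels T) (h : remove T {x} = none) : T = leaf x := by
  have : labels T \ {x} = ∅ := by rw [← labels_remove T {x}, h]; rfl
  apply good_of_labels_singleton hg
  apply Finset.Subset.antisymm
  · intro y hy
    by_contra hne
    exact (Finset.eq_empty_iff_forall_notMem.mp this y) (by simp [hy, hne])
  · intro y hy
    simp at hy
    exact hy ▸ hx

theorem graft_back {T T₀ : LTree α} {x : α} (hg : Good T) (hx : x ∈ labels T)
    (h : remove T {x} = some T₀) :
    ∃ p T', graftAt x T₀ p = some T' ∧ Iso T' T := by
  induction T generalizing T₀ with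
  | leaf a =>
    simp [labels] at hx
    subst hx
    rw [remove] at h
    simp [restrict] at h
  | node l r ihl ihr =>
    obtain ⟨gl, gr, hd⟩ := hg
    simp only [labels, Finset.mem_union] at hx
    rcases hx with hx | hx
    · have hxr : x ∉ labels r := Finset.disjoint_left.mp hd hx
      rw [remove_node_left hx hxr] at h
      cases h' : remove l {x} with
      | none =>
        rw [h'] at h
        simp at h
        subst h
        have hleaf : l = leaf x := remove_singleton_none gl hx h'
        subst hleaf
        exact ⟨[], node (leaf x) r, by simp [graftAt], iso_refl _⟩
      | some l₀ =>
        rw [h'] at h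
        simp at h
        obtain ⟨p, l', hp, hiso⟩ := ihl gl hx h'
        subst h
        exact ⟨true :: p, node l' r, by simp [graftAt, hp], Iso.node hiso (iso_refl r)⟩
    · have hxl : x ∉ labels l := Finset.disjoint_right.mp hd hx
      rw [remove_node_right hxl hx] at h
      cases h' : remove r {x} with
      | none =>
        rw [h'] at h
        simp at h
        subst h
        have hleaf : r = leaf x := remove_singleton_none gr hx h'
        subst hleaf
        exact ⟨[], node (leaf x) l, by simp [graftAt],
          Iso.swap (Iso.leaf x) (iso_refl l)⟩
      | some r₀ =>
        rw [h'] at h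
        simp at h
        obtain ⟨p, r', hp, hiso⟩ := ihr gr hx h'
        subst h
        exact ⟨false :: p, node l r', by simp [graftAt, hp], Iso.node (iso_refl l) hiso⟩

end Aux5

section Aux6

theorem labels_eq_singleton_of_remove_none {T : LTree α} {x : α}
    (h : remove T {x} = none) (hx : x ∈ labels T) : labels T = {x} := by
  have he : labels T \ {x} = ∅ := by rw [← labels_remove T {x}, h]; rfl
  apply Finset.Subset.antisymm
  · intro y hy
    by_contra hne
    exact (Finset.eq_empty_iff_forall_notMem.mp he y) (by simp [hy, hne])
  · intro y hy
    simp at hy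
    exact hy ▸ hx

theorem step_labels {x : α} {T T' : LTree α} (hx : x ∈ labels T)
    (h : LPRStep x T T') : labels T' = labels T := by
  rcases h with ⟨hn, rfl⟩ | ⟨T₀, p, hT, hg⟩
  · rw [labels_eq_singleton_of_remove_none hn hx]; rfl
  · rw [graft_labels hg]
    have : labels T₀ = labels T \ {x} := by rw [← labels_remove T {x}, hT]; rfl
    rw [this]
    ext y
    simp only [Finset.mem_insert, Finset.mem_sdiff, Finset.mem_singleton]
    constructor
    · rintro (rfl | ⟨h1, _⟩)
      · exact hx
      · exact h1
    · intro hy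
      by_cases hxy : y = x
      · exact Or.inl hxy
      · exact Or.inr ⟨hy, hxy⟩

theorem step_good {x : α} {T T' : LTree α} (hG : Good T)
    (h : LPRStep x T T') : Good T' := by
  rcases h with ⟨hn, rfl⟩ | ⟨T₀, p, hT, hg⟩
  · trivial
  · have g0 : Good T₀ := by
      have := good_remove hG {x}
      rw [hT] at this
      exact this
    have hx0 : x ∉ labels T₀ := by
      have : labels T₀ = labels T \ {x} := by rw [← labels_remove T {x}, hT]; rfl
      rw [this]
      simp
    exact graft_good hg g0 hx0

theorem step_iso_left {x : α} {U T T' : LTree α} (hI : Iso U T)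
    (h : LPRStep x T T') : ∃ U', LPRStep x U U' ∧ Iso U' T' := by
  have hrem : OptIso (remove U {x}) (remove T {x}) := iso_remove hI _
  rcases h with ⟨hn, rfl⟩ | ⟨T₀, p, hT, hg⟩
  · rw [hn] at hrem
    cases hU : remove U {x} with
    | none => exact ⟨leaf x, Or.inl ⟨hU, rfl⟩, iso_refl _⟩
    | some u => rw [hU] at hrem; exact absurd hrem (by simp [OptIso])
  · rw [hT] at hrem
    cases hU : remove U {x} with
    | none => rw [hU] at hrem; exact absurd hrem (by simp [OptIso])
    | some U₀ =>
      rw [hU] at hrem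
      obtain ⟨q, U', hq, hiso⟩ := graft_iso hrem hg
      exact ⟨U', Or.inr ⟨U₀, q, hU, hq⟩, hiso⟩

theorem step_reverse {x : α} {T T' : LTree α} (hG : Good T) (hx : x ∈ labels T)
    (h : LPRStep x T T') : ∃ T'', LPRStep x T' T'' ∧ Iso T'' T := by
  rcases h with ⟨hn, rfl⟩ | ⟨T₀, p, hT, hg⟩
  · have hT : T = leaf x := remove_singleton_none hG hx hn
    subst hT
    exact ⟨leaf x, Or.inl ⟨hn, rfl⟩, iso_refl _⟩
  · have hx0 : x ∉ labels T₀ := by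
      have : labels T₀ = labels T \ {x} := by rw [← labels_remove T {x}, hT]; rfl
      rw [this]; simp
    obtain ⟨q, T'', hq, hiso⟩ := graft_back hG hx hT
    exact ⟨T'', Or.inr ⟨T₀, q, remove_graft hg hx0, hq⟩, hiso⟩

theorem turnsInto_iso_left {L : List α} {U T T' : LTree α} (hI : Iso U T)
    (h : TurnsInto L T T') : TurnsInto L U T' := by
  induction h generalizing U with
  | nil h' => exact TurnsInto.nil (iso_trans hI h')
  | cons hs ht ih =>
    obtain ⟨U'', hs', hI'⟩ := step_iso_left hI hs
    exact TurnsInto.cons hs' (ih hI')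

theorem turnsInto_iso_right {L : List α} {T T' T'' : LTree α}
    (h : TurnsInto L T T') (hI : Iso T' T'') : TurnsInto L T T'' := by
  induction h with
  | nil h' => exact TurnsInto.nil (iso_trans h' hI)
  | cons hs ht ih => exact TurnsInto.cons hs (ih hI)

theorem turnsInto_append {L₁ L₂ : List α} {T T'' T' : LTree α}
    (h1 : TurnsInto L₁ T T'') (h2 : TurnsInto L₂ T'' T') :
    TurnsInto (L₁ ++ L₂) T T' := by
  induction h1 with
  | nil h' => exact turnsInto_iso_left h' h2
  | cons hs ht ih => exact TurnsInto.cons hs (ih h2)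

theorem turnsInto_snoc {L : List α} {x : α} {T T'' T' : LTree α}
    (h1 : TurnsInto L T T'') (h2 : LPRStep x T'' T') :
    TurnsInto (L ++ [x]) T T' :=
  turnsInto_append h1 (TurnsInto.cons h2 (TurnsInto.nil (iso_refl _)))

theorem turnsInto_reverse {L : List α} {T T' : LTree α} (hG : Good T)
    (hL : ∀ x ∈ L, x ∈ labels T) (h : TurnsInto L T T') :
    TurnsInto L.reverse T' T := by
  induction h with
  | nil h' => exact TurnsInto.nil (iso_symm h')
  | @cons x xs T T'' T' hs ht ih =>
    have hx : x ∈ labels T := hL x (by simp)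
    have hlab : labels T'' = labels T := step_labels hx hs
    have hG'' : Good T'' := step_good hG hs
    have ih' := ih hG'' (fun y hy => hlab ▸ hL y (by simp [hy]))
    obtain ⟨T₃, hs', hI⟩ := step_reverse hG hx hs
    rw [List.reverse_cons]
    exact turnsInto_iso_right (turnsInto_snoc ih' hs') hI

end Aux6

section Aux7

/-- Graft `x` above the root of a possibly empty tree. -/
def graftRoot (x : α) : Option (LTree α) → LTree α
  | none => leaf x
  | some t => node (leaf x) t

/-- Successively prune each leaf in the list and park it above the root. -/
def park : List α → LTree α → LTree α
  | [], T => T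
  | x :: l, T => park l (graftRoot x (remove T {x}))

theorem step_graftRoot (x : α) (T : LTree α) :
    LPRStep x T (graftRoot x (remove T {x})) := by
  cases h : remove T {x} with
  | none => exact Or.inl ⟨h, rfl⟩
  | some t₀ => exact Or.inr ⟨t₀, [], h, by simp [graftAt, graftRoot]⟩

theorem turnsInto_park (l : List α) (T : LTree α) : TurnsInto l T (park l T) := by
  induction l generalizing T with
  | nil => exact TurnsInto.nil (iso_refl T)
  | cons x l ih => exact TurnsInto.cons (step_graftRoot x T) (ih _)

theorem labels_graftRoot (x : α) (T : LTree α) :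
    labels (graftRoot x (remove T {x})) = insert x (labels T) := by
  cases h : remove T {x} with
  | none =>
    have he : labels T \ {x} = ∅ := by rw [← labels_remove T {x}, h]; rfl
    simp only [graftRoot, labels]
    ext y
    simp only [Finset.mem_singleton, Finset.mem_insert]
    constructor
    · rintro rfl; exact Or.inl rfl
    · rintro (rfl | hy)
      · rfl
      · by_contra hne
        exact (Finset.eq_empty_iff_forall_notMem.mp he y) (by simp [hy, hne])
  | some t₀ =>
    have he : labels t₀ = labels T \ {x} := by rw [← labels_remove T {x}, h]; rfl
    simp only [graftRoot, labels, he]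
    ext y
    simp only [Finset.mem_union, Finset.mem_singleton, Finset.mem_sdiff,
      Finset.mem_insert]
    by_cases hxy : y = x <;> simp [hxy]

theorem remove_graftRoot_eq (x : α) (T : LTree α) (S : Finset α) :
    remove (graftRoot x (remove T {x})) S =
      if x ∈ S then remove T (insert x S)
      else some (graftRoot x (remove T (insert x S))) := by
  rw [remove_insert]
  cases h : remove T {x} with
  | none =>
    simp only [graftRoot, removeO]
    by_cases hx : x ∈ S <;>
      simp [remove, labels, restrict, Finset.mem_sdiff, hx]
  | some t₀ =>
    have he : labels t₀ = labels T \ {x} := by rw [← labels_remove T {x}, h]; rfl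
    have hx0 : x ∉ labels t₀ := by rw [he]; simp
    simp only [graftRoot, removeO]
    have hlab : labels (node (leaf x) t₀) = insert x (labels t₀) := by
      simp only [labels]
      ext y; simp
    have hrt : restrict t₀ (labels (node (leaf x) t₀) \ S) = remove t₀ S := by
      rw [remove]
      apply restrict_congr
      rw [hlab]
      ext y
      simp only [Finset.mem_inter, Finset.mem_sdiff, Finset.mem_insert]
      constructor
      · rintro ⟨hy, _ | h2, h3⟩
        · exact absurd ‹y = x› (fun e => hx0 (e ▸ hy))
        · exact ⟨hy, h2, h3⟩
      · rintro ⟨hy, h2, h3⟩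
        exact ⟨hy, Or.inr h2, h3⟩
    by_cases hx : x ∈ S
    · rw [if_pos hx, remove]
      show restrict (node (leaf x) t₀) _ = _
      simp only [restrict, hrt]
      rw [if_neg (by simp [Finset.mem_sdiff, hx] :
        ¬ x ∈ labels (node (leaf x) t₀) \ S)]
      cases remove t₀ S <;> rfl
    · rw [if_neg hx, remove]
      show restrict (node (leaf x) t₀) _ = _
      simp only [restrict, hrt]
      rw [if_pos (by rw [hlab]; simp [Finset.mem_sdiff, hx] :
        x ∈ labels (node (leaf x) t₀) \ S)]
      cases remove t₀ S <;> rfl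

theorem optIso_removeO {t u : Option (LTree α)} (h : OptIso t u) (S : Finset α) :
    OptIso (removeO t S) (removeO u S) := by
  cases t <;> cases u <;> simp [OptIso, removeO] at h ⊢
  · exact iso_remove h S

theorem park_iso {l : List α} {T U : LTree α} (hlab : labels T = labels U)
    (h : OptIso (remove T l.toFinset) (remove U l.toFinset)) :
    Iso (park l T) (park l U) := by
  induction l generalizing T U with
  | nil =>
    simp only [List.toFinset_nil] at h
    rw [remove, remove, Finset.sdiff_empty, Finset.sdiff_empty,
      restrict_full le_rfl, restrict_full le_rfl] at h
    exact h
  | cons x l ih =>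
    simp only [List.toFinset_cons] at h
    simp only [park]
    apply ih
    · rw [labels_graftRoot, labels_graftRoot, hlab]
    · rw [remove_graftRoot_eq, remove_graftRoot_eq]
      by_cases hx : x ∈ l.toFinset
      · rw [if_pos hx, if_pos hx]
        exact h
      · rw [if_neg hx, if_neg hx]
        cases h1 : remove T (insert x l.toFinset) <;>
          cases h2 : remove U (insert x l.toFinset) <;>
          rw [h1, h2] at h <;>
          simp [OptIso, graftRoot] at h ⊢
        · exact Iso.leaf x
        · exact Iso.node (Iso.leaf x) h

theorem turnsInto_optIso {L : List α} {T T' : LTree α} (h : TurnsInto L T T') :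
    OptIso (remove T L.toFinset) (remove T' L.toFinset) := by
  induction h with
  | nil h' => exact iso_remove h' _
  | @cons x xs T T'' T' hs ht ih =>
    simp only [List.toFinset_cons]
    have h1 : OptIso (remove T (insert x xs.toFinset))
        (remove T'' (insert x xs.toFinset)) := by
      rw [remove_insert, remove_insert]
      rcases hs with ⟨hn, rfl⟩ | ⟨T₀, p, hT, hg⟩
      · rw [hn]
        have : remove (leaf x) {x} = none := by
          simp [remove, labels, restrict, Finset.mem_sdiff]
        rw [this]
        trivial
      · have hx0 : x ∉ labels T₀ := by
          have : labels T₀ = labels T \ {x} := by rw [← labels_remove T {x}, hT]; rfl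
          rw [this]; simp
        rw [hT, remove_graft hg hx0]
        exact optIso_refl _
    have h2 : OptIso (remove T'' (insert x xs.toFinset))
        (remove T' (insert x xs.toFinset)) := by
      rw [show insert x xs.toFinset = xs.toFinset ∪ {x} from by ext y; simp [or_comm],
        remove_union, remove_union]
      exact optIso_removeO ih {x}
    exact optIso_trans h1 h2

end Aux7

end LTree

open LTree

/-- Lemma 12 of the paper.  For trees `T₁, T₂` on the same
label set `𝒳` and `X ⊆ 𝒳`: `T₁ − X = T₂ − X` iff there is an LPR sequence
`(x₁,…,x_k)` turning `T₁` into `T₂` with `X = {x₁,…,x_k}`. -/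
theorem lpr_sequence_equiv {α : Type u} [DecidableEq α] (𝒳 : Finset α)
    (T₁ T₂ : LTree α) (h₁ : IsTreeOn T₁ 𝒳) (h₂ : IsTreeOn T₂ 𝒳)
    (X : Finset α) (hX : X ⊆ 𝒳) :
    OptIso (remove T₁ X) (remove T₂ X) ↔
      ∃ L : List α, TurnsInto L T₁ T₂ ∧ L.toFinset = X := by
  constructor
  · intro h
    obtain ⟨g₁, hl₁⟩ := h₁
    obtain ⟨g₂, hl₂⟩ := h₂
    set xs := X.toList with hxs
    have hxsf : xs.toFinset = X := Finset.toList_toFinset X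
    have hp1 : TurnsInto xs T₁ (park xs T₁) := turnsInto_park xs T₁
    have hp2 : TurnsInto xs T₂ (park xs T₂) := turnsInto_park xs T₂
    have hiso : Iso (park xs T₁) (park xs T₂) :=
      park_iso (hl₁.trans hl₂.symm) (by rw [hxsf]; exact h)
    have h3 : TurnsInto xs.reverse (park xs T₂) T₂ :=
      turnsInto_reverse g₂
        (fun y hy => by rw [hl₂]; exact hX (by rwa [← hxsf, List.mem_toFinset])) hp2
    have h4 : TurnsInto xs.reverse (park xs T₁) T₂ := turnsInto_iso_left hiso h3
    refine ⟨xs ++ xs.reverse, turnsInto_append hp1 h4, ?_⟩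
    simp [hxsf]
  · rintro ⟨L, hT, rfl⟩
    exact turnsInto_optIso hT
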